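/- arXiv:math/0511011 — 2 statements merged into one kernel-verified Lean document; each statement's English description precedes it below -/
import Mathlib

section
/- Let A ⊆ (0,1) be a measurable set with Leb(A) > 0 and L ⊆ (0,1) a dense countable set. For s ∈ (0,1), let T_s : (0,1) → (0,1) be the cyclic shift T_s(t) = t + s mod 1. Then the set A ∩ T_s(L) is infinite for almost all s ∈ (0,1). -/
open MeasureTheory Set Metric Filter
open scoped ENNReal Topology

noncomputable section

/-- The cyclic shift `T_s(t) = t + s mod 1` of the interval `(0,1)`. -/
def Tshift (s t : ℝ) : ℝ := if t + s < 1 then t + s else t + s - 1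

lemma measurable_tshift (t : ℝ) : Measurable (fun s => Tshift s t) := by
  unfold Tshift
  exact Measurable.ite (measurableSet_lt (measurable_const.add measurable_id) measurable_const)
    (measurable_const.add measurable_id) ((measurable_const.add measurable_id).sub measurable_const)

lemma dense_helper (L : Set ℝ) (hLd : Ioo (0:ℝ) 1 ⊆ closure L)
    (F : Set ℝ) (hF : F.Finite) :
    ∀ c d : ℝ, 0 ≤ c → c < d → d ≤ 1 → ((L \ F) ∩ Ioo c d).Nonempty := by
  intro c d hc hcd hd
  have hsub : Ioo c d ⊆ Ioo (0:ℝ) 1 :=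
    fun x hx => ⟨lt_of_le_of_lt hc hx.1, lt_of_lt_of_le hx.2 hd⟩
  have h1 : ∀ x ∈ Ioo c d, x ∈ closure (Ioo c d ∩ L) := by
    intro x hx
    exact (isOpen_Ioo (a := c) (b := d)).inter_closure ⟨hx, hLd (hsub hx)⟩
  have hinf : (L ∩ Ioo c d).Infinite := by
    by_contra hfin
    rw [Set.not_infinite] at hfin
    have hfin' : (Ioo c d ∩ L).Finite := by rwa [inter_comm] at hfin
    have hcl : Ioo c d ⊆ Ioo c d ∩ L := by
      intro x hx
      have := h1 x hx
      rwa [hfin'.isClosed.closure_eq] at this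
    exact (Set.Ioo_infinite hcd) (hfin'.subset hcl)
  obtain ⟨x, hx⟩ := (hinf.diff hF).nonempty
  exact ⟨x, ⟨⟨hx.1.1, hx.2⟩, hx.1.2⟩⟩

lemma key_lemma (A : Set ℝ) (hAm : MeasurableSet A) (hAsub : A ⊆ Ioo (0:ℝ) 1)
    (hApos : 0 < volume A)
    (D S : Set ℝ)
    (hD : ∀ c d : ℝ, 0 ≤ c → c < d → d ≤ 1 → (D ∩ Ioo c d).Nonempty)
    (hSm : MeasurableSet S) (hSsub : S ⊆ Ioo (0:ℝ) 1)
    (hdisj : ∀ t ∈ D, ∀ s ∈ S, Tshift s t ∉ A) :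
    volume S = 0 := by
  by_contra hS0
  haveI : (ae (volume.restrict S)).NeBot :=
    MeasureTheory.ae_neBot.mpr (by rw [Ne, Measure.restrict_eq_zero]; exact hS0)
  obtain ⟨u, huT, huS⟩ := ((Besicovitch.ae_tendsto_measure_inter_div volume S).and
    (ae_restrict_mem hSm)).exists
  haveI : (ae (volume.restrict A)).NeBot :=
    MeasureTheory.ae_neBot.mpr (by rw [Ne, Measure.restrict_eq_zero]; exact hApos.ne')
  obtain ⟨a, haT, haA⟩ := ((Besicovitch.ae_tendsto_measure_inter_div volume A).and
    (ae_restrict_mem hAm)).exists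
  obtain ⟨ha0, ha1⟩ := hAsub haA
  obtain ⟨hu0, hu1⟩ := hSsub huS
  have h34eq : (3/4 : ℝ≥0∞) = ENNReal.ofReal (3/4) := by
    rw [ENNReal.ofReal_div_of_pos (by norm_num)]
    norm_num
  have h34 : (3/4 : ℝ≥0∞) < 1 := by
    rw [h34eq, show (1:ℝ≥0∞) = ENNReal.ofReal 1 by simp]
    exact ENNReal.ofReal_lt_ofReal_iff_of_nonneg (by norm_num) |>.2 (by norm_num)
  have hev1 := huT.eventually (eventually_gt_nhds h34)
  have hev2 := haT.eventually (eventually_gt_nhds h34)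
  have hev3 : ∀ᶠ r in 𝓝[>] (0:ℝ), r ∈ Ioo (0:ℝ) (min (a/2) ((1-a)/2)) :=
    Ioo_mem_nhdsGT_of_mem ⟨le_refl _, lt_min (by linarith) (by linarith)⟩
  obtain ⟨r, hr1, hr2, hr3⟩ := (hev1.and (hev2.and hev3)).exists
  obtain ⟨hrpos, hrlt⟩ := hr3
  have hra : r < a/2 := lt_of_lt_of_le hrlt (min_le_left _ _)
  have hra' : r < (1-a)/2 := lt_of_lt_of_le hrlt (min_le_right _ _)
  have hb0 : ENNReal.ofReal (2*r) ≠ 0 := (ENNReal.ofReal_pos.mpr (by linarith)).ne'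
  have hbt : ENNReal.ofReal (2*r) ≠ ⊤ := ENNReal.ofReal_ne_top
  have hlow : ∀ (X : Set ℝ) (x : ℝ),
      (3/4:ℝ≥0∞) < volume (X ∩ closedBall x r) / volume (closedBall x r) →
      ENNReal.ofReal (3/2*r) < volume (X ∩ closedBall x r) := by
    intro X x h
    rw [Real.volume_closedBall, ENNReal.lt_div_iff_mul_lt (Or.inl hb0) (Or.inl hbt)] at h
    calc ENNReal.ofReal (3/2*r) = (3/4:ℝ≥0∞) * ENNReal.ofReal (2*r) := by
          rw [h34eq, ← ENNReal.ofReal_mul (by norm_num)]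
          congr 1
          ring
      _ < volume (X ∩ closedBall x r) := h
  have hSlow := hlow S u hr1
  have hAlow := hlow A a hr2
  set B' := closedBall a (r + r/4) with hB'
  have hAlow' : ENNReal.ofReal (3/2*r) < volume (B' ∩ A) := by
    refine lt_of_lt_of_le hAlow (measure_mono ?_)
    intro x hx
    exact ⟨closedBall_subset_closedBall (by linarith) hx.2, hx.1⟩
  -- geometry: find a translation sending S ∩ ball into B' \ A
  have hmain : ∃ v : ℝ, S ∩ closedBall u r ⊆ (fun x => x + v) ⁻¹' (B' \ A) := by
    rcases le_or_gt u a with hua | hau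
    · obtain ⟨t, htD, ht1, ht2⟩ := hD (a - u) (min (a - u + r/4) 1) (by linarith)
        (lt_min (by linarith) (by linarith)) (min_le_right _ _)
      have ht2' : t < a - u + r/4 := lt_of_lt_of_le ht2 (min_le_left _ _)
      refine ⟨t, ?_⟩
      rintro x ⟨hxS, hxB⟩
      rw [mem_closedBall, Real.dist_eq, abs_le] at hxB
      have hlt : t + x < 1 := by linarith
      have hT : Tshift x t = t + x := if_pos hlt
      constructor
      · rw [mem_closedBall, Real.dist_eq, abs_le]
        constructor <;> linarith
      · intro hxA
        exact hdisj t htD x hxS (by rw [hT, add_comm]; exact hxA)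
    · obtain ⟨t, htD, ht1, ht2⟩ := hD (a - u + 1) (min (a - u + 1 + r/4) 1) (by linarith)
        (lt_min (by linarith) (by linarith)) (min_le_right _ _)
      have ht2' : t < a - u + 1 + r/4 := lt_of_lt_of_le ht2 (min_le_left _ _)
      refine ⟨t - 1, ?_⟩
      rintro x ⟨hxS, hxB⟩
      rw [mem_closedBall, Real.dist_eq, abs_le] at hxB
      have hlt : ¬ (t + x < 1) := by push_neg; linarith
      have hT : Tshift x t = t + x - 1 := if_neg hlt
      constructor
      · rw [mem_closedBall, Real.dist_eq, abs_le]
        constructor <;> [skip; skip] <;> linarith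
      · intro hxA
        refine hdisj t htD x hxS ?_
        rw [hT, show t + x - 1 = x + (t - 1) by ring]
        exact hxA
  obtain ⟨v, hsub2⟩ := hmain
  have hle : volume (S ∩ closedBall u r) ≤ volume (B' \ A) := by
    calc volume (S ∩ closedBall u r) ≤ volume ((fun x => x + v) ⁻¹' (B' \ A)) :=
          measure_mono hsub2
      _ = volume (B' \ A) := measure_preimage_add_right volume v _
  have hsum : ENNReal.ofReal (3/2*r) + ENNReal.ofReal (3/2*r) ≤ volume B' := by
    rw [← measure_inter_add_diff B' hAm]
    exact add_le_add hAlow'.le (hSlow.le.trans hle)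
  rw [← ENNReal.ofReal_add (by linarith) (by linarith), hB', Real.volume_closedBall] at hsum
  have hfin := (ENNReal.ofReal_le_ofReal_iff (by linarith)).1 hsum
  linarith

theorem stmt14 (A : Set ℝ) (hAm : MeasurableSet A) (hAsub : A ⊆ Ioo (0:ℝ) 1)
    (hApos : 0 < volume A)
    (L : Set ℝ) (hLsub : L ⊆ Ioo (0:ℝ) 1) (hLc : L.Countable)
    (hLd : Ioo (0:ℝ) 1 ⊆ closure L) :
    ∀ᵐ s ∂(volume.restrict (Ioo (0:ℝ) 1)),
      (A ∩ (Tshift s '' L)).Infinite := by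
  classical
  have hinj : ∀ s ∈ Ioo (0:ℝ) 1, InjOn (fun t => Tshift s t) (Ioo (0:ℝ) 1) := by
    rintro s ⟨hs0, hs1⟩ t1 ⟨h10, h11⟩ t2 ⟨h20, h21⟩ h
    simp only [Tshift] at h
    split_ifs at h <;> linarith
  have hLne : L.Nonempty := by
    obtain ⟨x, hx⟩ := dense_helper L hLd ∅ finite_empty 0 1 le_rfl one_pos le_rfl
    exact ⟨x, hx.1.1⟩
  obtain ⟨f, hf⟩ := hLc.exists_eq_range hLne
  set F : ℕ → Set ℝ := fun n => f '' Iic n with hFdef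
  have hFfin : ∀ n, (F n).Finite := fun n => (Set.finite_Iic n).image f
  set N : ℕ → Set ℝ := fun n =>
    Ioo (0:ℝ) 1 ∩ ⋂ t ∈ L \ F n, {s | Tshift s t ∉ A} with hNdef
  have hN0 : ∀ n, volume (N n) = 0 := by
    intro n
    have hcnt : (L \ F n).Countable := hLc.mono diff_subset
    haveI := hcnt.to_subtype
    have hNm : MeasurableSet (N n) := by
      refine measurableSet_Ioo.inter ?_
      rw [biInter_eq_iInter]
      exact MeasurableSet.iInter fun t => ((measurable_tshift (t : ℝ)) hAm).compl
    refine key_lemma A hAm hAsub hApos (L \ F n) (N n)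
      (dense_helper L hLd (F n) (hFfin n)) hNm (fun s hs => hs.1) ?_
    intro t ht s hs
    exact mem_iInter₂.1 hs.2 t ht
  have hcov : {s | ¬ (A ∩ (Tshift s '' L)).Infinite} ∩ Ioo (0:ℝ) 1 ⊆ ⋃ n, N n := by
    rintro s ⟨hfin, hsI⟩
    replace hfin : (A ∩ (Tshift s '' L)).Finite := Set.not_infinite.1 hfin
    have hH : ({t | t ∈ L ∧ Tshift s t ∈ A}).Finite := by
      refine Set.Finite.of_finite_image (f := fun t => Tshift s t) ?_
        ((hinj s hsI).mono (fun t ht => hLsub ht.1))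
      refine hfin.subset ?_
      rintro x ⟨t, ⟨htL, htA⟩, rfl⟩
      exact ⟨htA, mem_image_of_mem _ htL⟩
    set g : ℝ → ℕ := fun t => if h : ∃ k, f k = t then Nat.find h else 0 with hgdef
    refine mem_iUnion.2 ⟨hH.toFinset.sup g, hsI, ?_⟩
    refine mem_iInter₂.2 fun t ht hA' => ?_
    have htH : t ∈ {t | t ∈ L ∧ Tshift s t ∈ A} := ⟨ht.1, hA'⟩
    have hex : ∃ k, f k = t := by
      have : t ∈ range f := by rw [← hf]; exact ht.1
      exact this
    refine ht.2 ?_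
    refine ⟨g t, ?_, ?_⟩
    · exact Finset.le_sup (f := g) (hH.mem_toFinset.2 htH)
    · simp only [hgdef, dif_pos hex]
      exact Nat.find_spec hex
  rw [MeasureTheory.ae_iff, Measure.restrict_apply' measurableSet_Ioo]
  exact measure_mono_null hcov (measure_iUnion_null hN0)
end
end

section
/- The set M_W = {m ∈ M : m((0,1)×(0,1) ∖ W) = 0} of measures in M concentrated on a Borel set W, partially ordered by m ≤ m' (meaning m(E) ≤ m'(E) for all Borel E), contains a maximal element, where M is the set of positive Borel measures on (0,1)×(0,1) with both marginals bounded by Lebesgue measure. -/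
open MeasureTheory Set
open scoped ENNReal

noncomputable section

/-- The set of positive Borel measures on the plane whose marginals are
bounded by Lebesgue measure restricted to `(0,1)`. -/
def Mset : Set (Measure (ℝ × ℝ)) :=
  {m | m.map Prod.fst ≤ volume.restrict (Ioo (0:ℝ) 1) ∧
       m.map Prod.snd ≤ volume.restrict (Ioo (0:ℝ) 1)}

namespace Stmt18Aux

lemma tsum_iSup_mono {h : ℕ → ℕ → ℝ≥0∞} (hm : ∀ i, Monotone fun n => h n i) :
    ∑' i, ⨆ n, h n i = ⨆ n, ∑' i, h n i := by
  calc ∑' i, ⨆ n, h n i = ⨆ s : Finset ℕ, ∑ i ∈ s, ⨆ n, h n i := ENNReal.tsum_eq_iSup_sum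
    _ = ⨆ s : Finset ℕ, ⨆ n, ∑ i ∈ s, h n i :=
        iSup_congr fun s => ENNReal.finsetSum_iSup_of_monotone fun i => hm i
    _ = ⨆ n, ⨆ s : Finset ℕ, ∑ i ∈ s, h n i := iSup_comm
    _ = ⨆ n, ∑' i, h n i := by
        exact iSup_congr fun n => (ENNReal.tsum_eq_iSup_sum).symm

/-- The limit (supremum) of a monotone sequence of measures. -/
def limMeasure {α : Type*} [MeasurableSpace α] (f : ℕ → Measure α) (hf : Monotone f) :
    Measure α :=
  Measure.ofMeasurable (fun s _ => ⨆ n, f n s) (by simp)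
    (by
      intro g hg hd
      rw [tsum_iSup_mono (fun i => fun a b hab => hf hab (g i))]
      exact iSup_congr fun n => measure_iUnion hd hg)

lemma limMeasure_apply {α : Type*} [MeasurableSpace α] {f : ℕ → Measure α} {hf : Monotone f}
    {s : Set α} (hs : MeasurableSet s) : limMeasure f hf s = ⨆ n, f n s :=
  Measure.ofMeasurable_apply s hs

lemma eq_of_le_of_measure_univ_le {α : Type*} [MeasurableSpace α] {μ ν : Measure α}
    (h : μ ≤ ν) (h2 : ν univ ≤ μ univ) (hfin : μ univ ≠ ∞) : ν = μ := by
  ext E hE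
  refine le_antisymm ?_ (h E)
  have hc : μ Eᶜ ≤ ν Eᶜ := h Eᶜ
  have hfinc : ν Eᶜ ≠ ∞ := by
    intro hcontr
    have : ν univ = ∞ := top_unique (hcontr ▸ measure_mono (subset_univ _))
    exact hfin (top_unique (this ▸ h2))
  have key : ν E + ν Eᶜ ≤ μ E + ν Eᶜ := by
    calc ν E + ν Eᶜ = ν univ := measure_add_measure_compl hE
      _ ≤ μ univ := h2
      _ = μ E + μ Eᶜ := (measure_add_measure_compl hE).symm
      _ ≤ μ E + ν Eᶜ := add_le_add_right hc _
  exact ENNReal.le_of_add_le_add_right hfinc key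

lemma mass_le_one {m : Measure (ℝ × ℝ)} (hm : m ∈ Mset) : m univ ≤ 1 := by
  have h1 : m.map Prod.fst univ = m univ := by
    rw [Measure.map_apply measurable_fst MeasurableSet.univ, preimage_univ]
  have h2 : m.map Prod.fst univ ≤ volume.restrict (Ioo (0:ℝ) 1) univ := hm.1 univ
  rw [h1] at h2
  refine h2.trans ?_
  rw [Measure.restrict_apply_univ]
  simp [Real.volume_Ioo]

end Stmt18Aux

open Stmt18Aux in
theorem stmt18 (W : Set (ℝ × ℝ)) (hW : MeasurableSet W) :
    ∃ m : Measure (ℝ × ℝ),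
      (m ∈ Mset ∧ m ((Ioo (0:ℝ) 1 ×ˢ Ioo (0:ℝ) 1) \ W) = 0) ∧
      ∀ m' : Measure (ℝ × ℝ),
        m' ∈ Mset → m' ((Ioo (0:ℝ) 1 ×ˢ Ioo (0:ℝ) 1) \ W) = 0 →
        m ≤ m' → m' = m := by
  classical
  set D := (Ioo (0:ℝ) 1 ×ˢ Ioo (0:ℝ) 1) \ W with hDdef
  have hDm : MeasurableSet D := (measurableSet_Ioo.prod measurableSet_Ioo).diff hW
  set S : Set (Measure (ℝ × ℝ)) := {m | m ∈ Mset ∧ m D = 0} with hSdef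
  have key : ∀ c ⊆ S, IsChain (· ≤ ·) c → ∃ ub ∈ S, ∀ z ∈ c, z ≤ ub := by
    intro c hcS hchain
    rcases c.eq_empty_or_nonempty with rfl | hne
    · refine ⟨0, ⟨⟨?_, ?_⟩, by simp⟩, by simp⟩ <;>
        · intro s; simp
    -- the supremum of the total masses of elements of the chain
    set β : ℝ≥0∞ := ⨆ m : c, (m : Measure (ℝ × ℝ)) univ with hβdef
    have hβ1 : β ≤ 1 := iSup_le fun m => mass_le_one (hcS m.2).1
    have hβtop : β ≠ ∞ := fun h => by simp [h] at hβ1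
    -- choose a sequence in the chain with masses approaching β
    have hseq : ∀ n : ℕ, ∃ m ∈ c, β ≤ m univ + ((n:ℝ≥0∞) + 1)⁻¹ := by
      intro n
      have hεpos : (0:ℝ≥0∞) < ((n:ℝ≥0∞) + 1)⁻¹ := by
        rw [ENNReal.inv_pos]
        exact (ENNReal.add_lt_top.2 ⟨ENNReal.natCast_lt_top n, ENNReal.one_lt_top⟩).ne
      rcases eq_or_lt_of_le (zero_le : (0:ℝ≥0∞) ≤ β) with hβ0 | hβ0
      · exact ⟨hne.some, hne.some_mem, by rw [← hβ0]; exact zero_le⟩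
      · have hlt : β - ((n:ℝ≥0∞) + 1)⁻¹ < β := ENNReal.sub_lt_self hβtop hβ0.ne' hεpos.ne'
        rw [hβdef] at hlt
        obtain ⟨⟨m, hmc⟩, hm⟩ := lt_iSup_iff.1 hlt
        refine ⟨m, hmc, ?_⟩
        calc β ≤ β - ((n:ℝ≥0∞) + 1)⁻¹ + ((n:ℝ≥0∞) + 1)⁻¹ := le_tsub_add
          _ ≤ m univ + ((n:ℝ≥0∞) + 1)⁻¹ := add_le_add_left hm.le _
    choose ms hmsc hmsv using hseq
    -- build a monotone sequence dominating `ms`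
    let u : ℕ → Measure (ℝ × ℝ) := fun n => Nat.rec (ms 0)
      (fun k uk => @ite _ (uk ≤ ms (k+1)) (Classical.propDecidable _) (ms (k+1)) uk) n
    have hsucc : ∀ k, u (k+1) =
        @ite _ (u k ≤ ms (k+1)) (Classical.propDecidable _) (ms (k+1)) (u k) := fun k => rfl
    have huc : ∀ n, u n ∈ c := by
      intro n
      induction n with
      | zero => exact hmsc 0
      | succ k ih =>
        rw [hsucc k]
        rcases Classical.em (u k ≤ ms (k+1)) with h | h
        · rw [if_pos h]; exact hmsc (k+1)
        · rw [if_neg h]; exact ih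
    have hustep : ∀ n, u n ≤ u (n+1) := by
      intro n
      rw [hsucc n]
      rcases Classical.em (u n ≤ ms (n+1)) with h | h
      · rw [if_pos h]; exact h
      · rw [if_neg h]
    have humono : Monotone u := monotone_nat_of_le_succ hustep
    have huge : ∀ n, ms n univ ≤ u n univ := by
      intro n
      cases n with
      | zero => exact le_rfl
      | succ k =>
        rw [hsucc k]
        rcases Classical.em (u k ≤ ms (k+1)) with h | h
        · rw [if_pos h]
        · rw [if_neg h]
          rcases hchain.total (hmsc (k+1)) (huc k) with h' | h'
          · exact h' univ
          · exact absurd h' h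
    set μ := limMeasure u humono with hμdef
    have hμapp : ∀ {E : Set (ℝ × ℝ)}, MeasurableSet E → μ E = ⨆ n, u n E :=
      fun hE => limMeasure_apply hE
    have hμuniv : μ univ = β := by
      rw [hμapp MeasurableSet.univ]
      refine le_antisymm (iSup_le fun n => le_iSup_of_le ⟨u n, huc n⟩ le_rfl) ?_
      have h1 : ∀ n : ℕ, β ≤ (⨆ k, u k univ) + ((n:ℝ≥0∞) + 1)⁻¹ := fun n =>
        (hmsv n).trans (add_le_add_left ((huge n).trans (le_iSup (fun k => u k univ) n)) _)
      have h2 : β ≤ ⨅ n : ℕ, ((⨆ k, u k univ) + ((n:ℝ≥0∞) + 1)⁻¹) := le_iInf h1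
      refine h2.trans ?_
      rw [← ENNReal.add_iInf]
      have htop : ⨆ n : ℕ, ((n:ℝ≥0∞) + 1) = ∞ := by
        refine top_unique ?_
        rw [← ENNReal.iSup_natCast]
        exact iSup_mono fun n => le_add_right le_rfl
      have : ⨅ n : ℕ, ((n:ℝ≥0∞) + 1)⁻¹ = 0 := by
        rw [← ENNReal.inv_iSup, htop, ENNReal.inv_top]
      rw [this, add_zero]
    have hμmem : μ ∈ S := by
      refine ⟨⟨?_, ?_⟩, ?_⟩
      · rw [Measure.le_iff]
        intro E hE
        rw [Measure.map_apply measurable_fst hE, hμapp (measurable_fst hE)]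
        exact iSup_le fun n => by
          have := (hcS (huc n)).1.1 E
          rwa [Measure.map_apply measurable_fst hE] at this
      · rw [Measure.le_iff]
        intro E hE
        rw [Measure.map_apply measurable_snd hE, hμapp (measurable_snd hE)]
        exact iSup_le fun n => by
          have := (hcS (huc n)).1.2 E
          rwa [Measure.map_apply measurable_snd hE] at this
      · rw [hμapp hDm]
        simp only [(fun n => (hcS (huc n)).2 : ∀ n, u n D = 0)]
        exact iSup_const
    refine ⟨μ, hμmem, ?_⟩
    intro z hz
    rcases em (∃ n, z ≤ u n) with hzn | hzn
    · obtain ⟨n, hn⟩ := hzn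
      refine hn.trans ?_
      rw [Measure.le_iff]
      intro E hE
      rw [hμapp hE]
      exact le_iSup (fun k => u k E) n
    · push_neg at hzn
      replace hzn : ∀ n, ¬ z ≤ u n := hzn
      have hall : ∀ n, u n ≤ z := by
        intro n
        rcases hchain.total (huc n) hz with h | h
        · exact h
        · rcases eq_or_ne z (u n) with rfl | hne'
          · exact le_rfl
          · exact absurd h (hzn n)
      have hμz : μ ≤ z := by
        rw [Measure.le_iff]
        intro E hE
        rw [hμapp hE]
        exact iSup_le fun n => hall n E
      have hzμ : z univ ≤ μ univ := by
        rw [hμuniv]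
        exact le_iSup_of_le ⟨z, hz⟩ le_rfl
      have : z = μ := eq_of_le_of_measure_univ_le hμz hzμ
        (by rw [hμuniv]; exact (hβ1.trans_lt ENNReal.one_lt_top).ne)
      exact this.le
  obtain ⟨m, hm⟩ := zorn_le₀ S key
  refine ⟨m, ⟨hm.prop.1, hm.prop.2⟩, ?_⟩
  intro m' hm'1 hm'2 hle
  exact le_antisymm (hm.2 ⟨hm'1, hm'2⟩ hle) hle
end
end
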